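/- For every real number p with 1 ≤ p < ∞, in the Banach space ℓᵖ of real p-summable sequences there exists a set T which is Haar null and meager but not Haar meager. -/

import Mathlib

open MeasureTheory Set

/-- A set in a topological abelian group is *Haar meager* if there is a Borel set `B ⊇ A`,
a nonempty compact metric space `K` and a continuous `f : K → G` such that `f ⁻¹' (B + x)`
is meager in `K` for every `x ∈ G`. -/
def IsHaarMeager {G : Type*} [TopologicalSpace G] [AddCommGroup G] (A : Set G) : Prop :=
  ∃ B : Set G, A ⊆ B ∧ MeasurableSet[borel G] B ∧
    ∃ (K : Type) (_ : MetricSpace K) (_ : CompactSpace K) (_ : Nonempty K) (f : K → G),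
      Continuous f ∧ ∀ x : G, IsMeagre (f ⁻¹' ((fun b => b + x) '' B))

/-- A set in a topological abelian group is *Haar null* if there is a Borel probability
measure `μ` and a Borel set `B ⊇ A` with `μ (x + B) = 0` for every `x ∈ G`. -/
def IsHaarNull {G : Type*} [TopologicalSpace G] [AddCommGroup G] (A : Set G) : Prop :=
  ∃ μ : @Measure G (borel G), @IsProbabilityMeasure G (borel G) μ ∧
    ∃ B : Set G, A ⊆ B ∧ MeasurableSet[borel G] B ∧
      ∀ x : G, μ ((fun b => x + b) '' B) = 0

section Aux

open Metric Filter Topology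
open scoped ENNReal NNReal

namespace HNM

lemma isMeagre_iUnion' {X : Type*} [TopologicalSpace X] {ι : Type*} [Countable ι]
    {s : ι → Set X} (h : ∀ i, IsMeagre (s i)) : IsMeagre (⋃ i, s i) := by
  rw [IsMeagre, compl_iUnion]
  exact countable_iInter_mem.2 h

noncomputable def useq : ℕ → ℝ := TopologicalSpace.denseSeq ℝ

def Uop (j : ℕ) : Set ℝ := ⋃ i, ball (useq i) ((2:ℝ)⁻¹ ^ (i + j + 1))

def Nset : Set ℝ := ⋂ j, Uop j

lemma Uop_open (j : ℕ) : IsOpen (Uop j) := isOpen_iUnion fun i => isOpen_ball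

lemma Uop_dense (j : ℕ) : Dense (Uop j) := by
  have h : range useq ⊆ Uop j := by
    rintro _ ⟨i, rfl⟩
    exact mem_iUnion.2 ⟨i, mem_ball_self (by positivity)⟩
  exact Dense.mono h (TopologicalSpace.denseRange_denseSeq ℝ)

lemma Nset_measurable : MeasurableSet Nset :=
  MeasurableSet.iInter fun j => (Uop_open j).measurableSet

lemma Nset_null : volume Nset = 0 := by
  have hUle : ∀ j, volume (Uop j) ≤ (2:ℝ≥0∞)⁻¹ ^ j * 2 := by
    intro j
    calc volume (Uop j) ≤ ∑' i, volume (ball (useq i) ((2:ℝ)⁻¹ ^ (i + j + 1))) :=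
          measure_iUnion_le _
      _ ≤ ∑' i : ℕ, (2:ℝ≥0∞)⁻¹ ^ (i + j) := by
          refine ENNReal.tsum_le_tsum fun i => ?_
          rw [Real.volume_ball]
          have : (2:ℝ) * (2:ℝ)⁻¹ ^ (i + j + 1) = (2:ℝ)⁻¹ ^ (i + j) := by
            rw [pow_succ]; ring
          rw [this]
          have h1 : ((2:ℝ)⁻¹ : ℝ) ^ (i+j) = ((2:ℝ)⁻¹) ^ (i+j) := rfl
          rw [ENNReal.ofReal_pow (by norm_num)]
          have : ENNReal.ofReal (2:ℝ)⁻¹ = (2:ℝ≥0∞)⁻¹ := by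
            rw [ENNReal.ofReal_inv_of_pos (by norm_num)]
            norm_num
          rw [this]
      _ = ∑' i : ℕ, (2:ℝ≥0∞)⁻¹ ^ j * (2:ℝ≥0∞)⁻¹ ^ i := by
          congr 1; funext i; rw [← pow_add]; ring_nf
      _ = (2:ℝ≥0∞)⁻¹ ^ j * ∑' i : ℕ, (2:ℝ≥0∞)⁻¹ ^ i := ENNReal.tsum_mul_left
      _ = (2:ℝ≥0∞)⁻¹ ^ j * 2 := by
          rw [ENNReal.tsum_geometric]
          congr 1
          rw [ENNReal.one_sub_inv_two]
          simp
  have hle : ∀ j, volume Nset ≤ (2:ℝ≥0∞)⁻¹ ^ j * 2 :=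
    fun j => le_trans (measure_mono (iInter_subset _ j)) (hUle j)
  have htend : Tendsto (fun j : ℕ => (2:ℝ≥0∞)⁻¹ ^ j * 2) atTop (nhds 0) := by
    have h1 : Tendsto (fun j : ℕ => (2:ℝ≥0∞)⁻¹ ^ j) atTop (nhds 0) :=
      ENNReal.tendsto_pow_atTop_nhds_zero_of_lt_one (by
        rw [ENNReal.inv_lt_one]; exact ENNReal.one_lt_two)
    have := ENNReal.Tendsto.mul_const h1 (Or.inr (by norm_num : (2:ℝ≥0∞) ≠ ⊤))
    simpa using this
  have := ge_of_tendsto' htend hle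
  simpa using le_antisymm this zero_le

lemma goodc {K : Type} [MetricSpace K] [CompactSpace K] [Nonempty K]
    (h : K → ℝ) (hh : Continuous h) (a b : ℝ) (hab : a < b) :
    ∃ c ∈ Ioo a b, ¬ IsMeagre {k : K | h k + c ∈ Nset} := by
  classical
  obtain ⟨B, hBc, hBne, hBbasis⟩ := TopologicalSpace.exists_countable_basis K
  have hBpt : ∀ V : B, (V : Set K).Nonempty := by
    rintro ⟨V, hV⟩
    rcases eq_empty_or_nonempty V with rfl | hne
    · exact absurd hV hBne
    · exact hne
  choose kV hkV using hBpt
  haveI : Countable B := hBc.to_subtype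
  set Bad : Set ℝ := ⋃ j : ℕ, ⋃ V : B, {c : ℝ | h (kV V) + c ∈ (Uop j)ᶜ} with hBad
  have hBadMeagre : IsMeagre Bad := by
    refine isMeagre_iUnion' fun j => isMeagre_iUnion' fun V => ?_
    set s : Set ℝ := {c : ℝ | h (kV V) + c ∈ (Uop j)ᶜ} with hs
    have hclosed : IsClosed s :=
      IsClosed.preimage (by continuity) (Uop_open j).isClosed_compl
    have hint : interior s = ∅ := by
      by_contra hne
      obtain ⟨c₀, hc₀⟩ := nonempty_iff_ne_empty.2 hne
      obtain ⟨r, hr, hball⟩ := Metric.isOpen_iff.1 isOpen_interior c₀ hc₀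
      obtain ⟨z, hz, hzball⟩ := (Uop_dense j).exists_mem_open isOpen_ball
        ⟨h (kV V) + c₀, mem_ball_self hr⟩
      have hcz : z - h (kV V) ∈ ball c₀ r := by
        rw [mem_ball] at hzball ⊢
        rw [Real.dist_eq] at hzball ⊢
        have : z - h (kV V) - c₀ = z - (h (kV V) + c₀) := by ring
        rw [this]
        exact hzball
      have : z - h (kV V) ∈ s := interior_subset (hball hcz)
      rw [hs] at this
      simp only [mem_setOf_eq] at this
      apply this
      have : h (kV V) + (z - h (kV V)) = z := by ring
      rw [this]
      exact hz
    rw [IsMeagre]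
    exact residual_of_dense_open hclosed.isOpen_compl
      (interior_eq_empty_iff_dense_compl.1 hint)
  have hgood : ∃ c ∈ Badᶜ, c ∈ Ioo a b := by
    have hd : Dense Badᶜ := dense_of_mem_residual hBadMeagre
    exact hd.exists_mem_open isOpen_Ioo ⟨(a+b)/2, by constructor <;> linarith⟩
  obtain ⟨c, hcBad, hcab⟩ := hgood
  refine ⟨c, hcab, ?_⟩
  intro hS
  set S : Set K := {k : K | h k + c ∈ Nset} with hSdef
  have hScompl : Sᶜ = ⋃ j : ℕ, {k : K | h k + c ∈ (Uop j)ᶜ} := by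
    ext k
    simp only [hSdef, mem_compl_iff, mem_setOf_eq, Nset, mem_iInter, not_forall,
      mem_iUnion, mem_compl_iff]
  have hCj : ∀ j : ℕ, IsMeagre {k : K | h k + c ∈ (Uop j)ᶜ} := by
    intro j
    set Cj : Set K := {k : K | h k + c ∈ (Uop j)ᶜ} with hCjdef
    have hclosed : IsClosed Cj :=
      IsClosed.preimage (by continuity) (Uop_open j).isClosed_compl
    have hint : interior Cj = ∅ := by
      by_contra hne
      obtain ⟨k₀, hk₀⟩ := nonempty_iff_ne_empty.2 hne
      obtain ⟨V, hVB, hkV₀, hVsub⟩ :=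
        hBbasis.exists_subset_of_mem_open hk₀ isOpen_interior
      have hmem : kV ⟨V, hVB⟩ ∈ Cj := interior_subset (hVsub (hkV ⟨V, hVB⟩))
      apply hcBad
      rw [hBad]
      rw [mem_iUnion]
      exact ⟨j, mem_iUnion.2 ⟨⟨V, hVB⟩, hmem⟩⟩
    rw [IsMeagre]
    exact residual_of_dense_open hclosed.isOpen_compl
      (interior_eq_empty_iff_dense_compl.1 hint)
  have hSc : IsMeagre Sᶜ := by
    rw [hScompl]
    exact isMeagre_iUnion' hCj
  have hres1 : Sᶜ ∈ residual K := hS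
  have hres2 : S ∈ residual K := by have := hSc; rwa [IsMeagre, compl_compl] at this
  have hdense : Dense (S ∩ Sᶜ) := dense_of_mem_residual (Filter.inter_mem hres2 hres1)
  rw [inter_compl_self] at hdense
  exact absurd hdense.nonempty (by simp [Set.not_nonempty_empty])


variable {q : ℝ≥0∞} [Fact (1 ≤ q)]
local notation "G" => lp (fun _ : ℕ => ℝ) q

lemma hq0 : q ≠ 0 := by
  have := (Fact.out : 1 ≤ q); intro h; simp [h] at this

lemma htr (hq : q ≠ ∞) : 0 < q.toReal := ENNReal.toReal_pos hq0 hq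

lemma coord_abs_le (y : G) (m : ℕ) : |y m| ≤ ‖y‖ := by
  simpa using lp.norm_apply_le_norm hq0 y m

lemma coord_dist_le (y z : G) (m : ℕ) : |y m - z m| ≤ ‖y - z‖ := by
  have := coord_abs_le (y - z) m
  rwa [lp.coeFn_sub, Pi.sub_apply] at this

lemma continuous_coord (m : ℕ) : Continuous fun y : G => y m := by
  apply Metric.continuous_iff.2
  intro y ε hε
  exact ⟨ε, hε, fun z hz => lt_of_le_of_lt (by simpa [Real.dist_eq, dist_eq_norm] using coord_dist_le z y m) hz⟩

lemma norm_single' (hq : q ≠ ∞) (i : ℕ) (a : ℝ) : ‖(lp.single q i a : G)‖ = |a| := by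
  simpa using lp.norm_single (E := fun _ : ℕ => ℝ) (pos_iff_ne_zero.2 hq0) i a

lemma single_apply' (i j : ℕ) (a : ℝ) :
    (lp.single q i a : G) j = if j = i then a else 0 := by
  rcases eq_or_ne j i with h | h
  · subst h; simp [lp.single_apply_self]
  · simp [lp.single_apply_ne _ _ _ h, h]

lemma single_sub (i : ℕ) (a b : ℝ) :
    (lp.single q i (a - b) : G) = lp.single q i a - lp.single q i b := by
  apply lp.ext
  funext j
  rcases eq_or_ne j i with h | h
  · subst h; simp [lp.single_apply_self]
  · simp [lp.single_apply_ne _ _ _ h]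

lemma coord_eventually_small (hq : q ≠ ∞) (y : G) {δ : ℝ} (hδ : 0 < δ) :
    ∃ M : ℕ, ∀ m ≥ M, |y m| ≤ δ := by
  have hsum : Summable fun i : ℕ => ‖y i‖ ^ q.toReal := (lp.memℓp y).summable (htr hq)
  have h0 := hsum.tendsto_atTop_zero
  have hev : ∀ᶠ m in atTop, ‖y m‖ ^ q.toReal < δ ^ q.toReal :=
    h0.eventually_lt_const (by positivity)
  rcases hev.exists_forall_of_atTop with ⟨M, hM⟩
  refine ⟨M, fun m hm => ?_⟩
  by_contra hlt
  push_neg at hlt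
  have : δ ^ q.toReal ≤ ‖y m‖ ^ q.toReal := by
    apply Real.rpow_le_rpow hδ.le _ (htr hq).le
    rw [Real.norm_eq_abs]; exact hlt.le
  exact absurd (hM m hm) (not_lt.2 this)


lemma single_zero (i : ℕ) : (lp.single q i (0:ℝ) : G) = 0 := by
  apply lp.ext
  funext j
  rcases eq_or_ne j i with h | h
  · subst h; simp [lp.single_apply_self]
  · simp [lp.single_apply_ne _ _ _ h]

lemma envelope (hq : q ≠ ∞) {C : Set G} (hC : IsCompact C) {δ : ℝ} (hδ : 0 < δ) :
    ∃ M : ℕ, ∀ m ≥ M, ∀ y ∈ C, |y m| ≤ δ := by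
  obtain ⟨t, htfin, htsub⟩ := Metric.totallyBounded_iff.1 hC.totallyBounded (δ/2) (by linarith)
  have hMf : ∀ z : G, ∃ M : ℕ, ∀ m ≥ M, |z m| ≤ δ/2 :=
    fun z => coord_eventually_small hq z (by linarith)
  choose Mf hMfs using hMf
  obtain ⟨M, hM⟩ := (htfin.image Mf).bddAbove
  refine ⟨M + 1, fun m hm y hy => ?_⟩
  have hy2 := htsub hy
  rw [Set.mem_iUnion₂] at hy2
  obtain ⟨z, hzt, hz⟩ := hy2
  have h1 : |y m - z m| ≤ ‖y - z‖ := coord_dist_le y z m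
  have h2 : ‖y - z‖ < δ / 2 := by rw [← dist_eq_norm]; exact mem_ball.1 hz
  have h3 : |z m| ≤ δ / 2 := by
    refine hMfs z m ?_
    have : Mf z ≤ M := hM (Set.mem_image_of_mem Mf hzt)
    omega
  calc |y m| ≤ |y m - z m| + |z m| := by
        have := abs_sub_abs_le_abs_sub (y m) (z m); nlinarith [abs_nonneg (y m - z m)]
      _ ≤ δ/2 + δ/2 := by linarith
      _ = δ := by ring

lemma exists_dense_seq (hq : q ≠ ∞) : ∃ d : ℕ → G, DenseRange d := by
  classical
  set Φ : (ℕ →₀ ℚ) → G := fun v => ∑ i ∈ v.support, lp.single q i ((v i : ℚ) : ℝ) with hΦ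
  have hcount : (Set.range Φ).Countable := Set.countable_range Φ
  obtain ⟨d, hd⟩ := hcount.exists_eq_range ⟨Φ 0, Set.mem_range_self 0⟩
  refine ⟨d, ?_⟩
  rw [DenseRange, ← hd]
  rw [Metric.dense_iff]
  intro y ε hε
  -- find finite truncation close to y
  have hsum := lp.hasSum_single hq y
  have hev := hsum.eventually (Metric.ball_mem_nhds y (by linarith : (0:ℝ) < ε/2))
  rw [SummationFilter.unconditional_filter, Filter.eventually_atTop] at hev
  obtain ⟨s₀, hs₀⟩ := hev
  obtain ⟨M, hMsub⟩ := Finset.exists_nat_subset_range s₀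
  have hA : (∑ i ∈ Finset.range M, lp.single q i (y i) : G) ∈ ball y (ε/2) :=
    hs₀ _ (le_trans hMsub (le_refl _))
  -- rational approximation
  have hrat : ∀ i : ℕ, ∃ r : ℚ, |y i - (r:ℝ)| < ε/(2*(M+1)) :=
    fun i => exists_rat_near (y i) (by positivity)
  choose ρ hρ using hrat
  set v : ℕ →₀ ℚ := Finsupp.onFinset (Finset.range M)
      (fun i => if i ∈ Finset.range M then ρ i else 0)
      (by intro i hi; by_contra hmem; exact hi (if_neg hmem)) with hv
  have hvval : ∀ i ∈ Finset.range M, (v i : ℝ) = (ρ i : ℝ) := by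
    intro i hi; rw [hv, Finsupp.onFinset_apply, if_pos hi]
  have hvsupp : v.support ⊆ Finset.range M := Finsupp.support_onFinset_subset
  have hΦv : Φ v = ∑ i ∈ Finset.range M, lp.single q i ((v i : ℚ) : ℝ) := by
    rw [hΦ]
    refine Finset.sum_subset hvsupp ?_
    intro i _ hi
    have : v i = 0 := Finsupp.notMem_support_iff.1 hi
    rw [this]; push_cast; exact single_zero i
  have hclose : ‖(∑ i ∈ Finset.range M, lp.single q i (y i) : G) - Φ v‖ ≤ ε/2 := by
    rw [hΦv, ← Finset.sum_sub_distrib]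
    have : ∀ i ∈ Finset.range M,
        (lp.single q i (y i) - lp.single q i ((v i : ℚ) : ℝ) : G)
          = lp.single q i (y i - ((v i : ℚ) : ℝ)) := fun i _ => (single_sub _ _ _).symm
    rw [Finset.sum_congr rfl this]
    calc ‖(∑ i ∈ Finset.range M, lp.single q i (y i - ((v i : ℚ):ℝ)) : G)‖
        ≤ ∑ i ∈ Finset.range M, ‖(lp.single q i (y i - ((v i : ℚ):ℝ)) : G)‖ :=
          norm_sum_le _ _
      _ ≤ ∑ _i ∈ Finset.range M, ε/(2*(M+1)) := by
          refine Finset.sum_le_sum ?_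
          intro i hi
          rw [norm_single' hq, hvval i hi]
          exact (hρ i).le
      _ ≤ ε/2 := by
          rw [Finset.sum_const, Finset.card_range, nsmul_eq_mul]
          have heq : (M:ℝ) * (ε / (2 * (M + 1))) = ε * M / (2*(M+1)) := by ring
          rw [heq, div_le_div_iff₀ (by positivity) (by norm_num)]
          nlinarith [hε.le, (Nat.cast_nonneg M : (0:ℝ) ≤ M)]
  refine ⟨Φ v, ?_, Set.mem_range_self v⟩
  rw [mem_ball, dist_comm]
  have h1 : dist y (Φ v) ≤ dist y (∑ i ∈ Finset.range M, lp.single q i (y i) : G)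
      + dist (∑ i ∈ Finset.range M, lp.single q i (y i) : G) (Φ v) := dist_triangle _ _ _
  have h2 : dist y (∑ i ∈ Finset.range M, lp.single q i (y i) : G) < ε/2 := by
    rw [dist_comm]; exact mem_ball.1 hA
  have h3 : dist (∑ i ∈ Finset.range M, lp.single q i (y i) : G) (Φ v) ≤ ε/2 := by
    rw [dist_eq_norm]; exact hclose
  linarith


noncomputable def coordCLM (m : ℕ) : G →L[ℝ] ℝ :=
  LinearMap.mkContinuous
    { toFun := fun y : G => y m
      map_add' := fun y z => by simp only []; rw [lp.coeFn_add]; rfl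
      map_smul' := fun c y => by simp only [RingHom.id_apply]; rw [lp.coeFn_smul]; rfl }
    1 (fun y => by simp only [one_mul, Real.norm_eq_abs]; exact coord_abs_le y m)

@[simp] lemma coordCLM_apply (m : ℕ) (y : G) : coordCLM m y = y m := rfl

lemma avoid (hq : q ≠ ∞) (d : ℕ → G) {C : Set G} (hC : IsCompact C) :
    ∃ x : G, ∀ n : ℕ, ∀ w ∈ C, (4:ℝ)⁻¹ ^ n / 8 ≤ ‖w - (d n + x)‖ := by
  classical
  have hr : ∀ n : ℕ, (0:ℝ) < (4:ℝ)⁻¹ ^ n / 8 := by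
    intro n; positivity
  have hNex : ∀ n : ℕ, ∃ N : ℕ, ∀ m ≥ N,
      (∀ w ∈ C, |w m| ≤ (4:ℝ)⁻¹ ^ n / 8) ∧ |(d n) m| ≤ (4:ℝ)⁻¹ ^ n / 8 := by
    intro n
    obtain ⟨N₁, hN₁⟩ := envelope hq hC (hr n)
    obtain ⟨N₂, hN₂⟩ := coord_eventually_small hq (d n) (hr n)
    exact ⟨max N₁ N₂, fun m hm =>
      ⟨hN₁ m (le_trans (le_max_left _ _) hm), hN₂ m (le_trans (le_max_right _ _) hm)⟩⟩
  choose N hN using hNex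
  set m : ℕ → ℕ := fun n => Nat.rec (N 0) (fun k mk => max (N (k+1)) (mk+1)) n with hm
  have hm0 : m 0 = N 0 := rfl
  have hmsucc : ∀ k, m (k+1) = max (N (k+1)) (m k + 1) := fun k => rfl
  have hmono : StrictMono m := by
    apply strictMono_nat_of_lt_succ
    intro k
    rw [hmsucc]
    exact lt_of_lt_of_le (Nat.lt_succ_self _) (le_max_right _ _)
  have hmN : ∀ n, N n ≤ m n := by
    intro n
    cases n with
    | zero => exact le_of_eq hm0.symm
    | succ k => rw [hmsucc]; exact le_max_left _ _
  set g : ℕ → G := fun n => lp.single q (m n) ((4:ℝ)⁻¹ ^ n) with hg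
  have hgsum : Summable g := by
    apply Summable.of_norm
    have : (fun n => ‖g n‖) = fun n => (4:ℝ)⁻¹ ^ n := by
      funext n
      rw [hg]
      simp only
      rw [norm_single' hq]
      rw [abs_of_nonneg (by positivity)]
    rw [this]
    exact summable_geometric_of_lt_one (by norm_num) (by norm_num)
  set x : G := ∑' n, g n with hx
  have hxcoord : ∀ n, x (m n) = (4:ℝ)⁻¹ ^ n := by
    intro n
    have h1 : coordCLM (m n) x = ∑' k, coordCLM (m n) (g k) :=
      ContinuousLinearMap.map_tsum _ hgsum
    have h2 : ∀ k, k ≠ n → coordCLM (m n) (g k) = 0 := by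
      intro k hk
      simp only [coordCLM_apply, hg]
      rw [single_apply']
      rw [if_neg]
      exact fun h => hk (hmono.injective h).symm
    have h3 : (∑' k, coordCLM (m n) (g k)) = coordCLM (m n) (g n) := tsum_eq_single n h2
    have h4 : coordCLM (m n) (g n) = (4:ℝ)⁻¹ ^ n := by
      simp only [coordCLM_apply, hg]
      rw [single_apply', if_pos rfl]
    have := h1.trans (h3.trans h4)
    simpa using this
  refine ⟨x, fun n w hw => ?_⟩
  have hcoord : |w (m n) - (d n + x) (m n)| ≤ ‖w - (d n + x)‖ := by
    have := coord_abs_le (w - (d n + x)) (m n)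
    rwa [lp.coeFn_sub, Pi.sub_apply] at this
  have hdx : (d n + x) (m n) = (d n) (m n) + x (m n) := by
    rw [lp.coeFn_add]; rfl
  have h1 : ∀ w' ∈ C, |w' (m n)| ≤ (4:ℝ)⁻¹ ^ n / 8 := (hN n (m n) (hmN n)).1
  have h2 : |(d n) (m n)| ≤ (4:ℝ)⁻¹ ^ n / 8 := (hN n (m n) (hmN n)).2
  have h3 : |w (m n)| ≤ (4:ℝ)⁻¹ ^ n / 8 := h1 w hw
  have key : (4:ℝ)⁻¹ ^ n / 8 ≤ |w (m n) - (d n + x) (m n)| := by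
    rw [hdx, hxcoord n]
    have habs : |w (m n) - ((d n) (m n) + (4:ℝ)⁻¹ ^ n)|
        ≥ (4:ℝ)⁻¹ ^ n - |w (m n)| - |(d n) (m n)| := by
      cases abs_cases (w (m n) - ((d n) (m n) + (4:ℝ)⁻¹ ^ n)) with
      | inl h => cases abs_cases (w (m n)) with
        | inl h2 => cases abs_cases ((d n) (m n)) with
          | inl h3 => linarith [h.1, h2.1, h3.1]
          | inr h3 => linarith [h.1, h2.1, h3.1]
        | inr h2 => cases abs_cases ((d n) (m n)) with
          | inl h3 => linarith [h.1, h2.1, h3.1]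
          | inr h3 => linarith [h.1, h2.1, h3.1]
      | inr h => cases abs_cases (w (m n)) with
        | inl h2 => cases abs_cases ((d n) (m n)) with
          | inl h3 => linarith [h.1, h2.1, h3.1]
          | inr h3 => linarith [h.1, h2.1, h3.1]
        | inr h2 => cases abs_cases ((d n) (m n)) with
          | inl h3 => linarith [h.1, h2.1, h3.1]
          | inr h3 => linarith [h.1, h2.1, h3.1]
    have hq4 : (0:ℝ) < (4:ℝ)⁻¹ ^ n := by positivity
    linarith [habs, h2, h3]
  linarith [hcoord, key]


theorem main (hq : q ≠ ∞) :
    ∃ T : Set G, IsHaarNull T ∧ IsMeagre T ∧ ¬ IsHaarMeager T := by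
  classical
  letI mG : MeasurableSpace G := borel G
  haveI : BorelSpace G := ⟨rfl⟩
  obtain ⟨d, hd⟩ := exists_dense_seq hq
  set U : Set G := ⋃ n, ball (d n) ((4:ℝ)⁻¹ ^ n / 8) with hU
  have hUopen : IsOpen U := isOpen_iUnion fun n => isOpen_ball
  have hUdense : Dense U := by
    refine Dense.mono ?_ hd
    rintro _ ⟨n, rfl⟩
    exact mem_iUnion.2 ⟨n, mem_ball_self (by positivity)⟩
  set F : Set G := Uᶜ with hF
  have hFclosed : IsClosed F := hUopen.isClosed_compl
  have hFmeagre : IsMeagre F := by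
    rw [IsMeagre, hF, compl_compl]
    exact residual_of_dense_open hUopen hUdense
  set T : Set G := F ∩ ((fun z : G => z 0) ⁻¹' Nset) with hT
  have hTmeas : MeasurableSet T :=
    hFclosed.measurableSet.inter ((continuous_coord 0).measurable Nset_measurable)
  -- the line map
  set φ : ℝ → G := fun τ => lp.single q 0 τ with hφ
  have hφcont : Continuous φ := by
    apply Metric.continuous_iff.2
    intro τ ε hε
    refine ⟨ε, hε, fun σ hσ => ?_⟩
    have : dist (φ σ) (φ τ) = |σ - τ| := by
      rw [hφ]
      simp only
      rw [dist_eq_norm, ← single_sub, norm_single' hq]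
    rw [this]
    rwa [Real.dist_eq] at hσ
  have hφmeas : Measurable φ := hφcont.measurable
  refine ⟨T, ?_, ?_, ?_⟩
  · -- Haar null
    haveI hprob : IsProbabilityMeasure (volume.restrict (Icc (0:ℝ) 1)) := by
      constructor
      rw [Measure.restrict_apply_univ, Real.volume_Icc]
      norm_num
    refine ⟨Measure.map φ (volume.restrict (Icc (0:ℝ) 1)),
      Measure.isProbabilityMeasure_map hφmeas.aemeasurable, T, subset_rfl, hTmeas, ?_⟩
    intro x
    have hA : (fun b => x + b) '' T = (fun b => -x + b) ⁻¹' T := by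
      ext z
      constructor
      · rintro ⟨b, hb, rfl⟩
        simpa using hb
      · intro hz
        exact ⟨-x + z, hz, add_neg_cancel_left x z⟩
    have hAmeas : MeasurableSet ((fun b => x + b) '' T) := by
      rw [hA]
      exact (measurable_const_add (-x)).comp measurable_id |>.comp measurable_id
        |> fun _ => ((measurable_const_add (-x)) hTmeas)
    rw [Measure.map_apply hφmeas hAmeas]
    have hsub : φ ⁻¹' ((fun b => x + b) '' T) ⊆ {τ : ℝ | τ - x 0 ∈ Nset} := by
      intro τ hτ
      rw [mem_preimage, hA, mem_preimage] at hτ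
      have h2 := hτ.2
      rw [mem_preimage] at h2
      have : (-x + φ τ) 0 = τ - x 0 := by
        rw [lp.coeFn_add, Pi.add_apply, lp.coeFn_neg, Pi.neg_apply]
        rw [hφ]
        simp only
        rw [single_apply' 0 0, if_pos rfl]
        ring
      rwa [this] at h2
    have h1 := measure_mono (μ := volume.restrict (Icc (0:ℝ) 1)) hsub
    have h2 : (volume.restrict (Icc (0:ℝ) 1)) {τ : ℝ | τ - x 0 ∈ Nset}
        ≤ volume {τ : ℝ | τ - x 0 ∈ Nset} := Measure.restrict_apply_le _ _
    have h3 : volume {τ : ℝ | τ - x 0 ∈ Nset} = 0 := by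
      have heq : {τ : ℝ | τ - x 0 ∈ Nset} = (fun τ : ℝ => τ + (-(x 0))) ⁻¹' Nset := by
        ext τ; simp [sub_eq_add_neg]
      rw [heq, measure_preimage_add_right, Nset_null]
    refine le_antisymm ?_ zero_le
    rw [← h3]
    exact le_trans h1 h2
  · -- meagre
    exact hFmeagre.mono inter_subset_left
  · -- not Haar meager
    rintro ⟨B, hTB, hBmeas, K, instK, instKC, instKN, f, hfc, hmeag⟩
    set C' : Set G := (fun pc : K × ℝ => f pc.1 + φ pc.2) '' (univ ×ˢ Icc (-1:ℝ) 1) with hC'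
    have hC'comp : IsCompact C' :=
      (isCompact_univ.prod isCompact_Icc).image
        ((hfc.comp continuous_fst).add (hφcont.comp continuous_snd))
    obtain ⟨x, hx⟩ := avoid hq d hC'comp
    have h0cont : Continuous fun k : K => f k 0 - x 0 :=
      ((continuous_coord 0).comp hfc).sub continuous_const
    obtain ⟨c, hcI, hcnm⟩ := goodc (fun k : K => f k 0 - x 0) h0cont (-1) 1 (by norm_num)
    set xs : G := x - φ c with hxs
    have claim1 : ∀ k : K, f k - xs ∈ F := by
      intro k
      have hw : f k + φ c ∈ C' := by
        rw [hC']
        exact ⟨(k, c), by simp [mem_Icc]; constructor <;> [linarith [hcI.1]; linarith [hcI.2]], rfl⟩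
      rw [hF, mem_compl_iff]
      intro hmemU
      rw [hU, mem_iUnion] at hmemU
      obtain ⟨n, hn⟩ := hmemU
      rw [mem_ball, dist_eq_norm] at hn
      have heq : f k - xs - d n = f k + φ c - (d n + x) := by
        rw [hxs]; abel
      rw [heq] at hn
      exact absurd hn (not_lt.2 (hx n _ hw))
    have claim2 : {k : K | (fun k : K => f k 0 - x 0) k + c ∈ Nset}
        ⊆ f ⁻¹' ((fun b => b + xs) '' B) := by
      intro k hk
      simp only [mem_setOf_eq] at hk
      rw [mem_preimage]
      refine ⟨f k - xs, hTB ?_, sub_add_cancel (f k) xs⟩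
      rw [hT]
      refine ⟨claim1 k, ?_⟩
      rw [mem_preimage]
      have : (f k - xs) 0 = f k 0 - x 0 + c := by
        rw [lp.coeFn_sub, Pi.sub_apply, hxs, lp.coeFn_sub, Pi.sub_apply]
        rw [hφ]
        simp only
        rw [single_apply' 0 0, if_pos rfl]
        ring
      rwa [this]
    exact hcnm ((hmeag xs).mono claim2)


end HNM

end Aux

/-- For every real `p` with `1 ≤ p < ∞`, in the Banach space `ℓᵖ` of real `p`-summable
sequences there exists a set which is Haar null and meager but not Haar meager. -/
theorem exists_haarNull_meager_not_haarMeager_lp (p : ℝ) (hp : 1 ≤ p) :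
    letI : Fact (1 ≤ ENNReal.ofReal p) := ⟨ENNReal.one_le_ofReal.mpr hp⟩
    ∃ T : Set (lp (fun _ : ℕ => ℝ) (ENNReal.ofReal p)),
      IsHaarNull T ∧ IsMeagre T ∧ ¬ IsHaarMeager T := by
  letI : Fact (1 ≤ ENNReal.ofReal p) := ⟨ENNReal.one_le_ofReal.mpr hp⟩
  exact HNM.main ENNReal.ofReal_ne_top
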